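/- Fluctuation-dissipation relation for simultaneous-update GAN SDE: if μ* is an invariant measure for the SDE with drift b₀ = (−∇_θΦ; ∇_ωΦ) and σσ^T = 2β^{−1}diag(Σ_θ,Σ_ω), and if E_{μ*}[𝒜₀Φ] = 0 where 𝒜₀f = b₀^T∇f + (1/2)Tr(σσ^T∇²f), then E_{μ*}[‖∇_θΦ(Θ*,𝒲*)‖₂² − ‖∇_ωΦ(Θ*,𝒲*)‖₂²] = β^{−1}E_{μ*}[Tr(Σ_θ(Θ*,𝒲*)∇²_θΦ(Θ*,𝒲*) + Σ_ω(Θ*,𝒲*)∇²_ωΦ(Θ*,𝒲*))]. -/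

import Mathlib

open Real Matrix

lemma my_trace_fromBlocks {m n : Type*} [Fintype m] [Fintype n]
    (A : Matrix m m ℝ) (B : Matrix m n ℝ) (C : Matrix n m ℝ) (D : Matrix n n ℝ) :
    (Matrix.fromBlocks A B C D).trace = A.trace + D.trace := by
  simp [Matrix.trace, Matrix.diag, Fintype.sum_sum_type, Matrix.fromBlocks]

/-- fluctuation-dissipation relation for the simultaneous-update GAN SDE. -/
theorem stmt_12 (dθ dω : ℕ) (β : ℝ) (hβ : 0 < β)
    (Φ : EuclideanSpace ℝ (Fin dθ ⊕ Fin dω) → ℝ) (hΦ : ContDiff ℝ 2 Φ)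
    (g : EuclideanSpace ℝ (Fin dθ ⊕ Fin dω) → (Fin dθ ⊕ Fin dω) → ℝ)
    (hg : ∀ u i, g u i = fderiv ℝ Φ u (EuclideanSpace.single i 1))
    (H : EuclideanSpace ℝ (Fin dθ ⊕ Fin dω) → Matrix (Fin dθ ⊕ Fin dω) (Fin dθ ⊕ Fin dω) ℝ)
    (hH : ∀ u i j, H u i j =
      fderiv ℝ (fun v => fderiv ℝ Φ v (EuclideanSpace.single j 1)) u (EuclideanSpace.single i 1))
    (Hθθ : EuclideanSpace ℝ (Fin dθ ⊕ Fin dω) → Matrix (Fin dθ) (Fin dθ) ℝ)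
    (Hωω : EuclideanSpace ℝ (Fin dθ ⊕ Fin dω) → Matrix (Fin dω) (Fin dω) ℝ)
    (hHθθ : ∀ u i j, Hθθ u i j = H u (.inl i) (.inl j))
    (hHωω : ∀ u i j, Hωω u i j = H u (.inr i) (.inr j))
    -- diffusion coefficients:
    (Sθ : EuclideanSpace ℝ (Fin dθ ⊕ Fin dω) → Matrix (Fin dθ) (Fin dθ) ℝ)
    (Sω : EuclideanSpace ℝ (Fin dθ ⊕ Fin dω) → Matrix (Fin dω) (Fin dω) ℝ)
    (hSθ : ∀ u, (Sθ u).IsSymm ∧ (Sθ u).PosSemidef)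
    (hSω : ∀ u, (Sω u).IsSymm ∧ (Sω u).PosSemidef)
    -- drift b₀ = (-∇_θΦ ; ∇_ωΦ) and σσᵀ = (2/β)·diag(Σθ, Σω):
    (b₀ : EuclideanSpace ℝ (Fin dθ ⊕ Fin dω) → (Fin dθ ⊕ Fin dω) → ℝ)
    (hb₀ : ∀ u, b₀ u = Sum.elim (fun i => -(g u (.inl i))) (fun j => g u (.inr j)))
    (SS : EuclideanSpace ℝ (Fin dθ ⊕ Fin dω) → Matrix (Fin dθ ⊕ Fin dω) (Fin dθ ⊕ Fin dω) ℝ)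
    (hSS : ∀ u, SS u = (2 / β) • Matrix.fromBlocks (Sθ u) 0 0 (Sω u))
    -- generator 𝒜₀Φ:
    (A₀Φ : EuclideanSpace ℝ (Fin dθ ⊕ Fin dω) → ℝ)
    (hA₀Φ : ∀ u, A₀Φ u = (b₀ u) ⬝ᵥ (g u) + (1/2 : ℝ) * ((SS u) * (H u)).trace)
    -- invariant measure and stationarity:
    (μ : MeasureTheory.Measure (EuclideanSpace ℝ (Fin dθ ⊕ Fin dω)))
    [MeasureTheory.IsProbabilityMeasure μ]
    (hstat : ∫ u, A₀Φ u ∂μ = 0)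
    -- all expectations are assumed finite:
    (hint1 : MeasureTheory.Integrable
      (fun u => (∑ i, (g u (.inl i)) ^ 2) - (∑ j, (g u (.inr j)) ^ 2)) μ)
    (hint2 : MeasureTheory.Integrable
      (fun u => ((Sθ u) * (Hθθ u)).trace + ((Sω u) * (Hωω u)).trace) μ) :
    ∫ u, ((∑ i, (g u (.inl i)) ^ 2) - (∑ j, (g u (.inr j)) ^ 2)) ∂μ =
      (1 / β) * ∫ u, (((Sθ u) * (Hθθ u)).trace + ((Sω u) * (Hωω u)).trace) ∂μ := by
  have key : ∀ u, A₀Φ u =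
      -((∑ i, (g u (.inl i)) ^ 2) - (∑ j, (g u (.inr j)) ^ 2)) +
      (1 / β) * (((Sθ u) * (Hθθ u)).trace + ((Sω u) * (Hωω u)).trace) := by
    intro u
    have hHblk : H u = Matrix.fromBlocks (Hθθ u) (Matrix.of fun i j => H u (.inl i) (.inr j))
        (Matrix.of fun i j => H u (.inr i) (.inl j)) (Hωω u) := by
      ext i j
      cases i <;> cases j <;> simp [Matrix.fromBlocks, hHθθ, hHωω]
    rw [hA₀Φ, hb₀, hSS, hHblk, Matrix.smul_mul, Matrix.trace_smul,
      Matrix.fromBlocks_multiply, my_trace_fromBlocks]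
    have hb : 0 < β := hβ
    field_simp
    simp [dotProduct, Fintype.sum_sum_type, Matrix.zero_mul]
    ring_nf
    rw [mul_inv_cancel₀ hb.ne']
    ring
  have h1 : MeasureTheory.Integrable
      (fun u => -((∑ i, (g u (.inl i)) ^ 2) - (∑ j, (g u (.inr j)) ^ 2))) μ := hint1.neg
  have h2 : MeasureTheory.Integrable
      (fun u => (1 / β) * (((Sθ u) * (Hθθ u)).trace + ((Sω u) * (Hωω u)).trace)) μ :=
    hint2.const_mul _
  have hsum : ∫ u, A₀Φ u ∂μ =
      (∫ u, -((∑ i, (g u (.inl i)) ^ 2) - (∑ j, (g u (.inr j)) ^ 2)) ∂μ) +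
      ∫ u, (1 / β) * (((Sθ u) * (Hθθ u)).trace + ((Sω u) * (Hωω u)).trace) ∂μ := by
    rw [← MeasureTheory.integral_add h1 h2]
    exact MeasureTheory.integral_congr_ae (Filter.Eventually.of_forall key)
  rw [MeasureTheory.integral_neg, MeasureTheory.integral_const_mul, hstat] at hsum
  linarith
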